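/- Let H ≥ 1 and define α_t = (H+1)/(H+t), α_t^i = α_i ∏_{j=i+1}^t (1-α_j) for 1 ≤ i ≤ t. Then for every t ≥ 1, max_{i∈[t]} α_t^i ≤ 2H/t and ∑_{i=1}^t (α_t^i)^2 ≤ 2H/t. -/

import Mathlib

/-- Learning rate α_t = (H+1)/(H+t). -/
noncomputable def lrate (H t : ℕ) : ℝ := (H + 1) / (H + t)

/-- Cumulative weight α_t^i = α_i ∏_{j=i+1}^t (1 - α_j). -/
noncomputable def lweight (H i t : ℕ) : ℝ :=
  lrate H i * ∏ j ∈ Finset.Icc (i + 1) t, (1 - lrate H j)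

lemma lrate_pos (H : ℕ) (hH : 1 ≤ H) (t : ℕ) : 0 < lrate H t := by
  unfold lrate
  have h1 : (1:ℝ) ≤ H := by exact_mod_cast hH
  have h2 : (0:ℝ) ≤ t := Nat.cast_nonneg t
  positivity

lemma lrate_le_one (H t : ℕ) (ht : 1 ≤ t) : lrate H t ≤ 1 := by
  unfold lrate
  have h2 : (1:ℝ) ≤ t := by exact_mod_cast ht
  rw [div_le_one (by linarith [Nat.cast_nonneg (α := ℝ) H])]
  linarith

lemma lweight_nonneg (H : ℕ) (hH : 1 ≤ H) (i t : ℕ) : 0 ≤ lweight H i t := by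
  unfold lweight
  apply mul_nonneg (lrate_pos H hH i).le
  apply Finset.prod_nonneg
  intro j hj
  have hj1 : 1 ≤ j := by
    have := (Finset.mem_Icc.mp hj).1; omega
  linarith [lrate_le_one H j hj1]

lemma lweight_rec (H i t : ℕ) (hi : i ≤ t) :
    lweight H i (t + 1) = lweight H i t * (1 - lrate H (t + 1)) := by
  unfold lweight
  rw [Finset.prod_Icc_succ_top (by omega : i + 1 ≤ t + 1)]
  ring

lemma lweight_self (H t : ℕ) : lweight H t t = lrate H t := by
  unfold lweight
  rw [Finset.Icc_eq_empty (by omega), Finset.prod_empty, mul_one]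

lemma lrate_step (H t : ℕ) (hH : 1 ≤ H) (ht : 1 ≤ t) :
    lrate H t * (1 - lrate H (t + 1)) ≤ lrate H (t + 1) := by
  unfold lrate
  have h1 : (1:ℝ) ≤ H := by exact_mod_cast hH
  have h2 : (1:ℝ) ≤ t := by exact_mod_cast ht
  have h3 : (0:ℝ) < (H:ℝ) + t := by linarith
  have h4 : (0:ℝ) < (H:ℝ) + (t + 1 : ℕ) := by push_cast; linarith
  have h5 : ((t + 1 : ℕ) : ℝ) = (t:ℝ) + 1 := by push_cast; ring
  rw [h5]
  have h6 : (0:ℝ) < (H:ℝ) + ((t:ℝ) + 1) := by linarith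
  rw [div_mul_eq_mul_div, div_le_div_iff₀ h3 h6]
  have h7 : 1 - ((H:ℝ) + 1) / ((H:ℝ) + ((t:ℝ)+1)) = (t:ℝ) / ((H:ℝ) + ((t:ℝ)+1)) := by
    field_simp
    ring
  rw [h7]
  have h8 : ((H:ℝ) + 1) * ((t:ℝ) / ((H:ℝ) + ((t:ℝ)+1))) * ((H:ℝ) + ((t:ℝ)+1))
      = ((H:ℝ) + 1) * (t:ℝ) := by field_simp
  rw [h8]
  nlinarith

lemma lweight_le_lrate (H : ℕ) (hH : 1 ≤ H) :
    ∀ t, 1 ≤ t → ∀ i ∈ Finset.Icc 1 t, lweight H i t ≤ lrate H t := by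
  intro t ht
  induction t, ht using Nat.le_induction with
  | base =>
    intro i hi
    have : i = 1 := by simp [Finset.mem_Icc] at hi; omega
    subst this
    rw [lweight_self]
  | succ t ht ih =>
    intro i hi
    rw [Finset.mem_Icc] at hi
    rcases Nat.lt_or_ge i (t + 1) with h | h
    · have hit : i ≤ t := by omega
      rw [lweight_rec H i t hit]
      have h1 : lweight H i t ≤ lrate H t := ih i (Finset.mem_Icc.mpr ⟨hi.1, hit⟩)
      have h2 : 0 ≤ 1 - lrate H (t + 1) := by
        linarith [lrate_le_one H (t+1) (by omega)]
      calc lweight H i t * (1 - lrate H (t + 1))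
          ≤ lrate H t * (1 - lrate H (t + 1)) := by
            apply mul_le_mul_of_nonneg_right h1 h2
        _ ≤ lrate H (t + 1) := lrate_step H t hH ht
    · have : i = t + 1 := by omega
      subst this
      rw [lweight_self]

lemma lweight_sum (H : ℕ) (hH : 1 ≤ H) :
    ∀ t, 1 ≤ t → ∑ i ∈ Finset.Icc 1 t, lweight H i t = 1 := by
  intro t ht
  induction t, ht using Nat.le_induction with
  | base =>
    rw [Finset.Icc_self, Finset.sum_singleton, lweight_self]
    unfold lrate
    have : (0:ℝ) < (H:ℝ) + 1 := by positivity
    rw [Nat.cast_one, div_self (by linarith)]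
  | succ t ht ih =>
    rw [Finset.sum_Icc_succ_top (by omega : 1 ≤ t + 1)]
    have hrw : ∑ i ∈ Finset.Icc 1 t, lweight H i (t + 1)
        = ∑ i ∈ Finset.Icc 1 t, lweight H i t * (1 - lrate H (t + 1)) := by
      apply Finset.sum_congr rfl
      intro i hi
      exact lweight_rec H i t (Finset.mem_Icc.mp hi).2
    rw [hrw, ← Finset.sum_mul, ih, one_mul, lweight_self]
    ring

lemma lrate_le_bound (H t : ℕ) (hH : 1 ≤ H) (ht : 1 ≤ t) :
    lrate H t ≤ 2 * H / t := by
  unfold lrate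
  have h1 : (1:ℝ) ≤ H := by exact_mod_cast hH
  have h2 : (1:ℝ) ≤ t := by exact_mod_cast ht
  rw [div_le_div_iff₀ (by linarith) (by linarith)]
  nlinarith

theorem stmt1 (H : ℕ) (hH : 1 ≤ H) (t : ℕ) (ht : 1 ≤ t) :
    (∀ i ∈ Finset.Icc 1 t, lweight H i t ≤ 2 * H / t) ∧
    ∑ i ∈ Finset.Icc 1 t, (lweight H i t) ^ 2 ≤ 2 * H / t := by
  have hmax := lweight_le_lrate H hH t ht
  have hsum := lweight_sum H hH t ht
  have hbd := lrate_le_bound H t hH ht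
  constructor
  · intro i hi
    exact (hmax i hi).trans hbd
  · calc ∑ i ∈ Finset.Icc 1 t, (lweight H i t) ^ 2
        ≤ ∑ i ∈ Finset.Icc 1 t, lweight H i t * lrate H t := by
          apply Finset.sum_le_sum
          intro i hi
          rw [sq]
          exact mul_le_mul_of_nonneg_left (hmax i hi) (lweight_nonneg H hH i t)
      _ = lrate H t := by rw [← Finset.sum_mul, hsum, one_mul]
      _ ≤ 2 * H / t := hbd
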